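/- A countably generated polynomial ring A[x_1, x_2, ...] over a commutative Noetherian ring A is a coherent ring. -/

import Mathlib

/-- A commutative ring is *coherent* if every finitely generated ideal is
finitely presented as a module. -/
def IsCoherentRing (A : Type*) [CommRing A] : Prop :=
  ∀ I : Ideal A, I.FG → Module.FinitePresentation A I

set_option maxHeartbeats 1000000 in
set_option synthInstance.maxHeartbeats 400000 in
/-- A polynomial ring in countably many variables over a commutative
Noetherian ring is coherent. -/
theorem isCoherentRing_mvPolynomial_countable
    (A : Type*) [CommRing A] [IsNoetherianRing A] :
    IsCoherentRing (MvPolynomial ℕ A) := by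
  classical
  intro I hI
  obtain ⟨s, hs⟩ := hI
  set t : Finset ℕ := s.biUnion (fun p => p.vars) with ht
  set σ := {x : ℕ // x ∈ t}
  set τ := {x : ℕ // x ∉ t}
  set S := MvPolynomial σ A with hS
  -- the inclusion S → R
  let ρ : S →ₐ[A] MvPolynomial ℕ A := MvPolynomial.rename (Subtype.val : σ → ℕ)
  -- every generator comes from S
  have hsub : ∀ p ∈ s, ∃ q : S, ρ q = p := by
    intro p hp
    have hv : p ∈ MvPolynomial.supported A (↑t : Set ℕ) := by
      rw [MvPolynomial.mem_supported]
      intro x hx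
      exact Finset.mem_coe.mpr (Finset.mem_biUnion.mpr ⟨p, hp, hx⟩)
    rw [MvPolynomial.supported_eq_range_rename] at hv
    obtain ⟨q, hq⟩ := hv
    exact ⟨q, hq⟩
  choose q hq using hsub
  haveI : IsNoetherianRing S := MvPolynomial.isNoetherianRing
  letI : Algebra S (MvPolynomial ℕ A) := ρ.toRingHom.toAlgebra
  have halg : ∀ c : S, algebraMap S (MvPolynomial ℕ A) c = ρ c := fun _ => rfl
  -- R is a free S-module
  let eqv : σ ⊕ τ ≃ ℕ := Equiv.sumCompl (· ∈ t)
  let eqv' : τ ⊕ σ ≃ ℕ := (Equiv.sumComm τ σ).trans eqv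
  let e : MvPolynomial τ S ≃ₐ[A] MvPolynomial ℕ A :=
    (MvPolynomial.sumAlgEquiv A τ σ).symm.trans (MvPolynomial.renameEquiv A eqv')
  have he : ∀ c : S, e (MvPolynomial.C c) = ρ c := by
    intro c
    have h1 : (MvPolynomial.sumAlgEquiv A τ σ).symm (MvPolynomial.C c)
        = MvPolynomial.rename Sum.inr c := by
      apply (MvPolynomial.sumAlgEquiv A τ σ).injective
      simp only [AlgEquiv.apply_symm_apply]
      have := MvPolynomial.sumAlgEquiv_comp_rename_inr A τ σ
      have := congrArg (fun f => f.toFun c) this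
      simpa using this.symm
    show (MvPolynomial.renameEquiv A eqv')
        ((MvPolynomial.sumAlgEquiv A τ σ).symm (MvPolynomial.C c)) = ρ c
    rw [h1]
    simp only [MvPolynomial.renameEquiv_apply, MvPolynomial.rename_rename]
    congr 1
  let lE : MvPolynomial τ S ≃ₗ[S] MvPolynomial ℕ A :=
    { e.toEquiv with
      map_add' := map_add e
      map_smul' := by
        intro c x
        simp only [RingHom.id_apply]
        rw [Algebra.smul_def, Algebra.smul_def, halg, MvPolynomial.algebraMap_eq]
        show e (MvPolynomial.C c * x) = ρ c * e x
        rw [map_mul, he] }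
  haveI : Module.Free S (MvPolynomial ℕ A) := Module.Free.of_equiv lE
  haveI : Module.Flat S (MvPolynomial ℕ A) := Module.Flat.of_free
  -- the ideal J in S
  let J : Ideal S := Ideal.span (Set.range fun p : s => q p p.2)
  have hJfg : J.FG := ⟨Finset.univ.image fun p : s => q p p.2, by
    simp only [J, Finset.coe_image]
    rw [Finset.coe_univ, Set.image_univ]⟩
  haveI : Module.Finite S J := ⟨(Submodule.fg_top _).mpr hJfg⟩
  haveI : Module.FinitePresentation S J := Module.finitePresentation_of_finite S J
  haveI : Module.FinitePresentation (MvPolynomial ℕ A)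
      (TensorProduct S (MvPolynomial ℕ A) J) := inferInstance
  -- the map φ : R ⊗[S] J → R
  let φ : TensorProduct S (MvPolynomial ℕ A) J →ₗ[MvPolynomial ℕ A] MvPolynomial ℕ A :=
    (TensorProduct.AlgebraTensorModule.rid S (MvPolynomial ℕ A)
      (MvPolynomial ℕ A)).toLinearMap ∘ₗ (J.subtype.baseChange (MvPolynomial ℕ A))
  have hφ : ∀ (x : MvPolynomial ℕ A) (j : J), φ (x ⊗ₜ j) = ρ (j : S) * x := by
    intro x j
    simp only [φ, LinearMap.coe_comp, Function.comp_apply, LinearMap.baseChange_tmul,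
      Submodule.coe_subtype, LinearEquiv.coe_coe,
      TensorProduct.AlgebraTensorModule.rid_tmul]
    rw [Algebra.smul_def, halg]
  have hinj : Function.Injective φ := by
    apply Function.Injective.comp
      (TensorProduct.AlgebraTensorModule.rid S (MvPolynomial ℕ A) (MvPolynomial ℕ A)).injective
    rw [LinearMap.baseChange_eq_ltensor]
    exact Module.Flat.lTensor_preserves_injective_linearMap J.subtype J.injective_subtype
  have hrange : LinearMap.range φ = I := by
    apply le_antisymm
    · rintro _ ⟨y, rfl⟩
      induction y using TensorProduct.induction_on with
      | zero => simp
      | tmul x j =>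
        rw [hφ]
        have hj : ρ (j : S) ∈ I := by
          have hle : Ideal.map ρ.toRingHom J ≤ I := by
            rw [Ideal.map_le_iff_le_comap, Ideal.span_le]
            rintro _ ⟨p, rfl⟩
            simp only [Set.mem_setOf_eq, SetLike.mem_coe, Ideal.mem_comap]
            show (ρ (q p p.2) : MvPolynomial ℕ A) ∈ I
            rw [hq p p.2, ← hs]
            exact Ideal.subset_span p.2
          exact hle (Ideal.mem_map_of_mem _ j.2)
        exact I.mul_mem_right x hj
      | add a b ha hb => rw [map_add]; exact I.add_mem ha hb
    · rw [← hs, Ideal.span_le]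
      intro p hp
      have hp' : p ∈ s := Finset.mem_coe.mp hp
      refine ⟨(1 : MvPolynomial ℕ A) ⊗ₜ ⟨q p hp', Ideal.subset_span ⟨⟨p, hp'⟩, rfl⟩⟩, ?_⟩
      rw [hφ, hq p hp', mul_one]
  -- transfer finite presentation along φ
  let ψ : TensorProduct S (MvPolynomial ℕ A) J →ₗ[MvPolynomial ℕ A] I :=
    (LinearEquiv.ofEq _ _ hrange).toLinearMap ∘ₗ φ.rangeRestrict
  have hψsurj : Function.Surjective ψ := by
    apply Function.Surjective.comp (LinearEquiv.ofEq _ _ hrange).surjective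
    exact φ.surjective_rangeRestrict
  apply Module.finitePresentation_of_surjective ψ hψsurj
  have hker : LinearMap.ker ψ = ⊥ := by
    rw [LinearMap.ker_comp]
    simp only [LinearEquiv.ker, Submodule.comap_bot]
    rw [LinearMap.ker_rangeRestrict, LinearMap.ker_eq_bot.mpr hinj]
  rw [hker]
  exact Submodule.fg_bot
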